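/- Let $d \ge 1$. There exists a constant $\kappa > 0$ depending only on $d$ such that for all grid-steps $h_1, \dots, h_d > 0$, all $p \in [1, \infty]$, and all $u \in L^p(\mathbb{R}^d)$, $\|u - Ku\|_p \;\le\; \kappa \, \sup\{\, \|\tau_w u - u\|_p \;:\; w \in \mathbb{R}^d, \; |w_i| \le h_i \text{ for all } i \,\}$, where $K$ is the hat-kernel operator $(Ku)(x) = \sum_{k} \psi_k(x) \|\psi_k\|_{L^1}^{-1} \int \psi_k u$ and $(\tau_w u)(x) = u(x + w)$. -/

import Mathlib

open BigOperators MeasureTheory ENNReal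

/-- The canonical hat function on `ℝ`, centered at `0` with support `[-1,1]`. -/
noncomputable def chi (t : ℝ) : ℝ := max 0 (1 - |t|)

lemma chi_nonneg (t : ℝ) : 0 ≤ chi t := le_max_left _ _
lemma chi_le_one (t : ℝ) : chi t ≤ 1 := by
  unfold chi
  have := abs_nonneg t
  exact max_le (by norm_num) (by linarith)
lemma chi_eq_zero {t : ℝ} (h : 1 ≤ |t|) : chi t = 0 := max_eq_left (by linarith)
lemma abs_lt_one_of_chi_ne_zero {t : ℝ} (h : chi t ≠ 0) : |t| < 1 := by
  by_contra hc
  exact h (chi_eq_zero (not_lt.1 hc))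
lemma continuous_chi : Continuous chi :=
  continuous_const.max (continuous_const.sub continuous_abs)

lemma chi_partition (t : ℝ) : chi (t - ⌊t⌋) + chi (t - (⌊t⌋ + 1)) = 1 := by
  have h0 : (0:ℝ) ≤ t - ⌊t⌋ := sub_nonneg.2 (Int.floor_le t)
  have h1 : t - ⌊t⌋ < 1 := by
    have := Int.lt_floor_add_one t; linarith
  unfold chi
  rw [abs_of_nonneg h0]
  have h2 : |t - (⌊t⌋ + 1)| = 1 - (t - ⌊t⌋) := by
    rw [abs_of_nonpos (by linarith)]; ring
  rw [h2]
  rw [max_eq_right (by linarith), max_eq_right (by linarith)]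
  ring

lemma chi_mem_floor {t : ℝ} {k : ℤ} (h : chi (t - k) ≠ 0) : k = ⌊t⌋ ∨ k = ⌊t⌋ + 1 := by
  have habs := abs_lt_one_of_chi_ne_zero h
  rw [abs_lt] at habs
  have h1 : ⌊t⌋ ≤ k := by
    have : (⌊t⌋ : ℝ) < k + 1 := lt_of_le_of_lt (Int.floor_le t) (by linarith)
    exact_mod_cast Int.lt_add_one_iff.1 (by exact_mod_cast this)
  have h2 : k ≤ ⌊t⌋ + 1 := by
    have : (k : ℝ) < ⌊t⌋ + 2 := by
      have := Int.lt_floor_add_one t; linarith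
    exact_mod_cast Int.lt_add_one_iff.1 (by exact_mod_cast (by push_cast; linarith : (k:ℝ) < (⌊t⌋ + 1 : ℤ) + 1))
  omega

lemma integral_chi : ∫ t : ℝ, chi t = 1 := by
  have hsupp : Function.support chi ⊆ Set.Icc (-1) 1 := by
    intro t ht
    have := abs_lt_one_of_chi_ne_zero ht
    rw [abs_lt] at this
    exact ⟨by linarith [this.1], by linarith [this.2]⟩
  have h1 : ∫ t : ℝ, chi t = ∫ t in Set.Icc (-1:ℝ) 1, chi t := by
    rw [← integral_indicator measurableSet_Icc, Set.indicator_eq_self.2 hsupp]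
  rw [h1, MeasureTheory.integral_Icc_eq_integral_Ioc,
    ← intervalIntegral.integral_of_le (by norm_num : (-1:ℝ) ≤ 1)]
  have h2 : ∫ t in (-1:ℝ)..1, chi t = ∫ t in (-1:ℝ)..1, (1 - |t|) := by
    apply intervalIntegral.integral_congr
    intro t ht
    rw [Set.uIcc_of_le (by norm_num : (-1:ℝ) ≤ 1)] at ht
    have : |t| ≤ 1 := abs_le.2 ⟨ht.1, ht.2⟩
    exact max_eq_right (by linarith)
  rw [h2]
  have hi : IntervalIntegrable (fun t : ℝ => |t|) volume (-1) 1 :=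
    (continuous_abs).intervalIntegrable _ _
  rw [intervalIntegral.integral_sub (intervalIntegrable_const) hi]
  have ha : ∫ t in (-1:ℝ)..1, |t| = 1 := by
    rw [← intervalIntegral.integral_add_adjacent_intervals
      ((continuous_abs).intervalIntegrable (-1) 0) ((continuous_abs).intervalIntegrable 0 1)]
    have hl : ∫ t in (-1:ℝ)..0, |t| = ∫ t in (-1:ℝ)..0, -t := by
      apply intervalIntegral.integral_congr
      intro t ht
      rw [Set.uIcc_of_le (by norm_num : (-1:ℝ) ≤ 0)] at ht
      exact abs_of_nonpos ht.2
    have hr : ∫ t in (0:ℝ)..1, |t| = ∫ t in (0:ℝ)..1, t := by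
      apply intervalIntegral.integral_congr
      intro t ht
      rw [Set.uIcc_of_le (by norm_num : (0:ℝ) ≤ 1)] at ht
      exact abs_of_nonneg ht.1
    rw [hl, hr, intervalIntegral.integral_neg, integral_id, integral_id]
    norm_num
  rw [ha]
  simp

variable {d : ℕ}

noncomputable def psi0 (h : Fin d → ℝ) (k : Fin d → ℤ) (x : Fin d → ℝ) : ℝ :=
  ∏ i, chi (x i / h i - k i)

lemma sum_gridS_aux (h x : Fin d → ℝ) :
    ∑ k ∈ Fintype.piFinset (fun i => ({⌊x i / h i⌋, ⌊x i / h i⌋ + 1} : Finset ℤ)),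
      psi0 h k x = 1 := by
  have := Finset.prod_univ_sum (fun i => ({⌊x i / h i⌋, ⌊x i / h i⌋ + 1} : Finset ℤ))
    (fun i j => chi (x i / h i - j))
  simp only [psi0]
  rw [← this]
  apply Finset.prod_eq_one
  intro i _
  rw [Finset.sum_pair (by omega : ⌊x i / h i⌋ ≠ ⌊x i / h i⌋ + 1)]
  have := chi_partition (x i / h i)
  push_cast
  push_cast at this
  linarith

lemma abs_sub_lt_of_psi0_ne {h : Fin d → ℝ} (hpos : ∀ i, 0 < h i) {k : Fin d → ℤ}
    {x : Fin d → ℝ} (hk : psi0 h k x ≠ 0) (i : Fin d) : |x i - k i * h i| < h i := by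
  have hne : chi (x i / h i - k i) ≠ 0 :=
    fun hz => hk (Finset.prod_eq_zero (Finset.mem_univ i) hz)
  have h1 := abs_lt_one_of_chi_ne_zero hne
  have hhi := hpos i
  have hx : x i - k i * h i = (x i / h i - k i) * h i := by field_simp
  rw [hx, abs_mul, abs_of_pos hhi]
  calc |x i / h i - ↑(k i)| * h i < 1 * h i := by
        exact mul_lt_mul_of_pos_right h1 hhi
    _ = h i := one_mul _

lemma integral_psi0 {h : Fin d → ℝ} (hpos : ∀ i, 0 < h i) (k : Fin d → ℤ) :
    ∫ x, psi0 h k x = ∏ i, h i := by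
  rw [show (∫ x : Fin d → ℝ, psi0 h k x) = ∏ i, ∫ t : ℝ, chi (t / h i - k i) from
    MeasureTheory.integral_fintype_prod_eq_prod (fun i t => chi (t / h i - k i))]
  apply Finset.prod_congr rfl
  intro i _
  have h1 : (fun t : ℝ => chi (t / h i - k i))
      = fun t : ℝ => chi ((t - k i * h i) / h i) := by
    funext t
    congr 1
    rw [sub_div, mul_div_cancel_right₀ _ (hpos i).ne']
  show (∫ t : ℝ, chi (t / h i - ↑(k i))) = h i
  rw [show (∫ t : ℝ, chi (t / h i - ↑(k i))) = ∫ t : ℝ, chi ((t - k i * h i) / h i) by rw [← h1]]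
  rw [integral_sub_right_eq_self (fun s => chi (s / h i)) ((k i : ℝ) * h i)]
  rw [MeasureTheory.Measure.integral_comp_div chi (h i)]
  rw [integral_chi, abs_of_pos (hpos i)]
  simp

lemma psi0_nonneg (h k x) : 0 ≤ psi0 (d := d) h k x :=
  Finset.prod_nonneg fun i _ => chi_nonneg _
lemma psi0_le_one (h k x) : psi0 (d := d) h k x ≤ 1 :=
  Finset.prod_le_one (fun i _ => chi_nonneg _) (fun i _ => chi_le_one _)

noncomputable def gridS (h : Fin d → ℝ) (x : Fin d → ℝ) : Finset (Fin d → ℤ) :=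
  Fintype.piFinset fun i => {⌊x i / h i⌋, ⌊x i / h i⌋ + 1}

lemma mem_gridS_of_ne {h x : Fin d → ℝ} {k : Fin d → ℤ} (hk : psi0 h k x ≠ 0) :
    k ∈ gridS h x := by
  rw [gridS, Fintype.mem_piFinset]
  intro i
  have hne : chi (x i / h i - k i) ≠ 0 := fun hz => hk (Finset.prod_eq_zero (Finset.mem_univ i) hz)
  rcases chi_mem_floor hne with h1 | h1 <;> simp [h1]

lemma sum_gridS (h x : Fin d → ℝ) : ∑ k ∈ gridS h x, psi0 h k x = 1 :=
  sum_gridS_aux h x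

lemma continuous_psi0 (h : Fin d → ℝ) (k : Fin d → ℤ) : Continuous (psi0 h k) :=
  continuous_finset_prod _ fun i _ =>
    continuous_chi.comp ((continuous_apply i).div_const _ |>.sub continuous_const)

lemma psi0_hasCompactSupport {h : Fin d → ℝ} (hpos : ∀ i, 0 < h i) (k : Fin d → ℤ) :
    HasCompactSupport (psi0 h k) := by
  apply HasCompactSupport.of_support_subset_isCompact
    (isCompact_univ_pi fun i => isCompact_Icc
      (a := (k i : ℝ) * h i - h i) (b := (k i : ℝ) * h i + h i))
  intro x hx
  intro i _
  have := abs_sub_lt_of_psi0_ne hpos hx i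
  rw [abs_lt] at this
  exact ⟨by linarith [this.1], by linarith [this.2]⟩

lemma integrable_psi0 {h : Fin d → ℝ} (hpos : ∀ i, 0 < h i) (k : Fin d → ℤ) :
    Integrable (psi0 h k) :=
  (continuous_psi0 h k).integrable_of_hasCompactSupport (psi0_hasCompactSupport hpos k)


lemma integrable_psi0_mul {h : Fin d → ℝ} (hpos : ∀ i, 0 < h i) {p : ℝ≥0∞} (hp : 1 ≤ p)
    {u : (Fin d → ℝ) → ℝ} (hu : MemLp u p volume) (hum : Measurable u) (k : Fin d → ℤ) :
    Integrable (fun y => psi0 h k y * u y) := by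
  set B : Set (Fin d → ℝ) :=
    Set.pi Set.univ (fun i => Set.Icc ((k i : ℝ) * h i - h i) ((k i : ℝ) * h i + h i)) with hB
  have hsupp : Function.support (fun y => psi0 h k y * u y) ⊆ B := by
    intro y hy
    have hψ : psi0 h k y ≠ 0 := fun hz => hy (by simp [hz])
    intro i _
    have := abs_sub_lt_of_psi0_ne hpos hψ i
    rw [abs_lt] at this
    exact ⟨by linarith [this.1], by linarith [this.2]⟩
  rw [← integrableOn_iff_integrable_of_support_subset hsupp]
  have hvol : volume B ≠ ⊤ := by
    rw [hB, volume_pi_pi]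
    exact (ENNReal.prod_lt_top fun i _ => by simp [Real.volume_Icc]).ne
  haveI : IsFiniteMeasure (volume.restrict B) :=
    ⟨by rwa [Measure.restrict_apply_univ, lt_top_iff_ne_top]⟩
  have hml : MemLp (fun y => psi0 h k y * u y) p volume := by
    refine ⟨((continuous_psi0 h k).measurable.mul hum).aestronglyMeasurable, ?_⟩
    have hle : eLpNorm (fun y => psi0 h k y * u y) p volume ≤ eLpNorm u p volume := by
      apply eLpNorm_mono
      intro y
      rw [Real.norm_eq_abs, Real.norm_eq_abs, abs_mul]
      calc |psi0 h k y| * |u y| ≤ 1 * |u y| := by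
            apply mul_le_mul_of_nonneg_right _ (abs_nonneg _)
            rw [abs_of_nonneg (psi0_nonneg h k y)]
            exact psi0_le_one h k y
        _ = |u y| := one_mul _
    exact lt_of_le_of_lt hle hu.2
  exact (hml.restrict B).integrable hp

noncomputable def Wbox (h : Fin d → ℝ) : Set (Fin d → ℝ) :=
  Set.pi Set.univ fun i => Set.Icc (-(2 * h i)) (2 * h i)

lemma pointwise_bound {h : Fin d → ℝ} (hpos : ∀ i, 0 < h i) {p : ℝ≥0∞} (hp : 1 ≤ p)
    {u : (Fin d → ℝ) → ℝ} (hu : MemLp u p volume) (hum : Measurable u) (x : Fin d → ℝ) :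
    (‖u x - ∑ᶠ k : Fin d → ℤ, psi0 h k x * (∏ i, h i)⁻¹ * ∫ y, psi0 h k y * u y‖₊ : ℝ≥0∞)
      ≤ ENNReal.ofReal (∏ i, h i)⁻¹ *
        ∫⁻ w in Wbox h, (‖u (x + w) - u x‖₊ : ℝ≥0∞) ∂volume := by
  set P : ℝ := ∏ i, h i with hPdef
  have hPpos : 0 < P := Finset.prod_pos fun i _ => hpos i
  set J : ℝ≥0∞ := ∫⁻ w in Wbox h, (‖u (x + w) - u x‖₊ : ℝ≥0∞) ∂volume with hJdef
  -- finsum to finite sum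
  have h1 : (∑ᶠ k : Fin d → ℤ, psi0 h k x * P⁻¹ * ∫ y, psi0 h k y * u y)
      = ∑ k ∈ gridS h x, psi0 h k x * P⁻¹ * ∫ y, psi0 h k y * u y := by
    apply finsum_eq_sum_of_support_subset
    intro k hk
    have hψ : psi0 h k x ≠ 0 := fun hz => hk (by simp [hz])
    exact mem_gridS_of_ne hψ
  have h2 : u x = ∑ k ∈ gridS h x, psi0 h k x * P⁻¹ * ∫ y, psi0 h k y * u x := by
    have hI : ∀ k : Fin d → ℤ, (∫ y, psi0 h k y * u x) = P * u x := by
      intro k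
      rw [MeasureTheory.integral_mul_const, integral_psi0 hpos, mul_comm]
    have : ∀ k ∈ gridS h x, psi0 h k x * P⁻¹ * ∫ y, psi0 h k y * u x
        = psi0 h k x * u x := by
      intro k _
      rw [hI k, mul_assoc, inv_mul_cancel_left₀ hPpos.ne']
    rw [Finset.sum_congr rfl this, ← Finset.sum_mul, sum_gridS, one_mul]
  have h3 : u x - (∑ k ∈ gridS h x, psi0 h k x * P⁻¹ * ∫ y, psi0 h k y * u y)
      = ∑ k ∈ gridS h x, psi0 h k x * P⁻¹ * ∫ y, psi0 h k y * (u x - u y) := by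
    conv_lhs => rw [h2]
    rw [← Finset.sum_sub_distrib]
    apply Finset.sum_congr rfl
    intro k _
    rw [← mul_sub]
    congr 1
    rw [← MeasureTheory.integral_sub ((integrable_psi0 hpos k).mul_const (u x))
      (integrable_psi0_mul hpos hp hu hum k)]
    congr 1
    funext y
    ring
  rw [h1, h3]
  -- triangle inequality
  have h4 : (‖∑ k ∈ gridS h x, psi0 h k x * P⁻¹ * ∫ y, psi0 h k y * (u x - u y)‖₊ : ℝ≥0∞)
      ≤ ∑ k ∈ gridS h x, (‖psi0 h k x * P⁻¹ * ∫ y, psi0 h k y * (u x - u y)‖₊ : ℝ≥0∞) := by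
    rw [← ENNReal.coe_finset_sum]
    exact_mod_cast nnnorm_sum_le _ _
  refine h4.trans ?_
  -- per-term bound
  have h5 : ∀ k ∈ gridS h x,
      (‖psi0 h k x * P⁻¹ * ∫ y, psi0 h k y * (u x - u y)‖₊ : ℝ≥0∞)
        ≤ ENNReal.ofReal (psi0 h k x) * (ENNReal.ofReal P⁻¹ * J) := by
    intro k _
    have e1 : ∀ a : ℝ, 0 ≤ a → (‖a‖₊ : ℝ≥0∞) = ENNReal.ofReal a := by
      intro a ha
      rw [← enorm_eq_nnnorm, ← ofReal_norm, Real.norm_eq_abs, abs_of_nonneg ha]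
    rw [nnnorm_mul, nnnorm_mul, ENNReal.coe_mul, ENNReal.coe_mul,
      e1 _ (psi0_nonneg h k x), e1 _ (inv_nonneg.2 hPpos.le), mul_assoc]
    by_cases hψ : psi0 h k x = 0
    · simp [hψ]
    refine mul_le_mul_right (mul_le_mul_right ?_ _) _
    set Bx : Set (Fin d → ℝ) :=
      Set.pi Set.univ (fun i => Set.Icc (x i - 2 * h i) (x i + 2 * h i)) with hBx
    have hBxm : MeasurableSet Bx := MeasurableSet.univ_pi fun i => measurableSet_Icc
    have hT : MeasurePreserving (fun w : Fin d → ℝ => x + w) volume volume :=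
      measurePreserving_add_left volume x
    have hTe : MeasurableEmbedding (fun w : Fin d → ℝ => x + w) :=
      (MeasurableEquiv.addLeft x).measurableEmbedding
    have hpre : (fun w : Fin d → ℝ => x + w) ⁻¹' Bx = Wbox h := by
      ext w
      simp only [hBx, Wbox, Set.mem_preimage, Set.mem_pi, Set.mem_univ, true_implies,
        Set.mem_Icc, Pi.add_apply]
      constructor
      · intro hw i
        have := hw i
        exact ⟨by linarith [this.1], by linarith [this.2]⟩
      · intro hw i
        have := hw i
        exact ⟨by linarith [this.1], by linarith [this.2]⟩
    calc (‖∫ y, psi0 h k y * (u x - u y)‖₊ : ℝ≥0∞)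
        ≤ ∫⁻ y, (‖psi0 h k y * (u x - u y)‖₊ : ℝ≥0∞) ∂volume :=
          enorm_integral_le_lintegral_enorm _
      _ ≤ ∫⁻ y, Set.indicator Bx (fun y => (‖u x - u y‖₊ : ℝ≥0∞)) y ∂volume := by
          apply lintegral_mono
          intro y
          by_cases hψy : psi0 h k y = 0
          · simp [hψy]
          have hyB : y ∈ Bx := by
            intro i _
            have h1' := abs_sub_lt_of_psi0_ne hpos hψ i
            have h2' := abs_sub_lt_of_psi0_ne hpos hψy i
            rw [abs_lt] at h1' h2'
            exact ⟨by linarith [h1'.1, h2'.2], by linarith [h1'.2, h2'.1]⟩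
          rw [Set.indicator_of_mem hyB]
          show (‖psi0 h k y * (u x - u y)‖₊ : ℝ≥0∞) ≤ _
          rw [nnnorm_mul, ENNReal.coe_mul, e1 _ (psi0_nonneg h k y)]
          calc ENNReal.ofReal (psi0 h k y) * (‖u x - u y‖₊ : ℝ≥0∞)
              ≤ 1 * (‖u x - u y‖₊ : ℝ≥0∞) :=
                mul_le_mul_left (ENNReal.ofReal_le_one.2 (psi0_le_one h k y)) _
            _ = _ := one_mul _
      _ = ∫⁻ y in Bx, (‖u x - u y‖₊ : ℝ≥0∞) ∂volume := lintegral_indicator hBxm _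
      _ = ∫⁻ w in Wbox h, (‖u x - u (x + w)‖₊ : ℝ≥0∞) ∂volume := by
          rw [← hpre]
          exact (hT.setLIntegral_comp_preimage_emb hTe _ _).symm
      _ = J := by
          rw [hJdef]
          apply lintegral_congr
          intro w
          rw [← enorm_eq_nnnorm, ← enorm_eq_nnnorm, ← ofReal_norm, ← ofReal_norm, norm_sub_rev]
  calc ∑ k ∈ gridS h x, (‖psi0 h k x * P⁻¹ * ∫ y, psi0 h k y * (u x - u y)‖₊ : ℝ≥0∞)
      ≤ ∑ k ∈ gridS h x, ENNReal.ofReal (psi0 h k x) * (ENNReal.ofReal P⁻¹ * J) :=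
        Finset.sum_le_sum h5
    _ = (∑ k ∈ gridS h x, ENNReal.ofReal (psi0 h k x)) * (ENNReal.ofReal P⁻¹ * J) :=
        (Finset.sum_mul _ _ _).symm
    _ = ENNReal.ofReal P⁻¹ * J := by
        rw [← ENNReal.ofReal_sum_of_nonneg (fun k _ => psi0_nonneg h k x), sum_gridS]
        simp

-- Jensen via Hölder
lemma jensen_rpow {α : Type*} [MeasurableSpace α] (μ : Measure α) (f : α → ℝ≥0∞)
    (hf : AEMeasurable f μ) {q : ℝ} (hq : 1 ≤ q) :
    (∫⁻ a, f a ∂μ) ^ q ≤ (μ Set.univ) ^ (q - 1) * ∫⁻ a, f a ^ q ∂μ := by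
  rcases eq_or_lt_of_le hq with hq1 | hq1
  · subst q
    simp only [ENNReal.rpow_one, sub_self, ENNReal.rpow_zero, one_mul]
    exact le_rfl
  · have hq0 : (0:ℝ) < q := by linarith
    have hpq : q.HolderConjugate (Real.conjExponent q) := Real.HolderConjugate.conjExponent hq1
    have hholder := ENNReal.lintegral_mul_le_Lp_mul_Lq μ hpq hf
      (aemeasurable_const (b := (1:ℝ≥0∞)))
    simp only [Pi.mul_apply, mul_one, ENNReal.one_rpow, lintegral_const, one_mul] at hholder
    have h2 : (∫⁻ a, f a ∂μ) ^ q
        ≤ (((∫⁻ a, f a ^ q ∂μ) ^ (1/q)) * ((μ Set.univ) ^ (1 / Real.conjExponent q))) ^ q :=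
      ENNReal.rpow_le_rpow hholder hq0.le
    refine h2.trans (le_of_eq ?_)
    rw [ENNReal.mul_rpow_of_nonneg _ _ hq0.le, ← ENNReal.rpow_mul, ← ENNReal.rpow_mul,
      one_div_mul_cancel hq0.ne', ENNReal.rpow_one, mul_comm]
    congr 2
    rw [Real.conjExponent]
    field_simp

lemma global_est {h : Fin d → ℝ} (hpos : ∀ i, 0 < h i) {p : ℝ≥0∞} (hp : 1 ≤ p)
    {u : (Fin d → ℝ) → ℝ} (hu : MemLp u p volume) (hum : Measurable u)
    (S : ℝ≥0∞)
    (hS : ∀ w, w ∈ Wbox h → eLpNorm (fun x => u (x + w) - u x) p volume ≤ S) :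
    eLpNorm (fun x => u x -
        ∑ᶠ k : Fin d → ℤ, psi0 h k x * (∏ i, h i)⁻¹ * ∫ y, psi0 h k y * u y) p volume
      ≤ 4 ^ d * S := by
  classical
  set c : ℝ≥0∞ := ENNReal.ofReal (∏ i, h i)⁻¹ with hc
  set W : Set (Fin d → ℝ) := Wbox h with hW
  have hWm : MeasurableSet W := MeasurableSet.univ_pi fun i => measurableSet_Icc
  have hWvol : volume W = ∏ i, ENNReal.ofReal (4 * h i) := by
    rw [hW, Wbox, volume_pi_pi]
    apply Finset.prod_congr rfl
    intro i _
    rw [Real.volume_Icc]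
    congr 1
    ring
  have hWfin : volume W ≠ ⊤ := by
    rw [hWvol]
    exact (ENNReal.prod_lt_top fun i _ => ofReal_lt_top).ne
  have hWpos : volume W ≠ 0 := by
    rw [hWvol]
    rw [Finset.prod_ne_zero_iff]
    intro i _
    simp only [ne_eq, ENNReal.ofReal_eq_zero, not_le]
    linarith [hpos i]
  have hcW : c * volume W = 4 ^ d := by
    rw [hWvol, hc, ← Finset.prod_inv_distrib,
      ENNReal.ofReal_prod_of_nonneg (fun i _ => inv_nonneg.2 (hpos i).le),
      ← Finset.prod_mul_distrib]
    have : ∀ i : Fin d, ENNReal.ofReal (h i)⁻¹ * ENNReal.ofReal (4 * h i) = 4 := by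
      intro i
      rw [← ENNReal.ofReal_mul (inv_nonneg.2 (hpos i).le)]
      rw [show (h i)⁻¹ * (4 * h i) = 4 by rw [mul_comm 4 (h i), ← mul_assoc, inv_mul_cancel₀ (hpos i).ne', one_mul]]
      norm_num
    rw [Finset.prod_congr rfl (fun i _ => this i), Finset.prod_const]
    simp
  have hG : Measurable (fun q : (Fin d → ℝ) × (Fin d → ℝ) =>
      (‖u (q.1 + q.2) - u q.1‖₊ : ℝ≥0∞)) :=
    (((hum.comp (measurable_fst.add measurable_snd)).sub
      (hum.comp measurable_fst)).nnnorm).coe_nnreal_ennreal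
  set F : (Fin d → ℝ) → (Fin d → ℝ) → ℝ≥0∞ :=
    fun x w => (‖u (x + w) - u x‖₊ : ℝ≥0∞) with hF
  set J : (Fin d → ℝ) → ℝ≥0∞ := fun x => ∫⁻ w in W, F x w ∂volume with hJ
  have hpt : ∀ x, (‖u x -
      ∑ᶠ k : Fin d → ℤ, psi0 h k x * (∏ i, h i)⁻¹ * ∫ y, psi0 h k y * u y‖₊ : ℝ≥0∞)
      ≤ c * J x := fun x => pointwise_bound hpos hp hu hum x
  by_cases hptop : p = ⊤
  · subst hptop
    rw [eLpNorm_exponent_top]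
    set A : Set ((Fin d → ℝ) × (Fin d → ℝ)) :=
      {q | q.2 ∈ W ∧ S < F q.1 q.2} with hA
    have hAm : MeasurableSet A := by
      apply MeasurableSet.inter
      · exact measurable_snd hWm
      · exact hG measurableSet_Ioi
    have hA0 : (volume.prod volume) A = 0 := by
      rw [Measure.prod_apply_symm hAm]
      have hsec : ∀ w : Fin d → ℝ, volume ((fun x => (x, w)) ⁻¹' A) = 0 := by
        intro w
        by_cases hw : w ∈ W
        · have h1 := hS w hw
          rw [eLpNorm_exponent_top] at h1
          have h2 : ∀ᵐ x : Fin d → ℝ, F x w ≤ S := by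
            filter_upwards [ae_le_eLpNormEssSup
              (f := fun x => u (x + w) - u x) (μ := volume)] with x hx
            exact le_trans hx h1
          rw [ae_iff] at h2
          rw [show (fun x : Fin d → ℝ => (x, w)) ⁻¹' A = {x | ¬ F x w ≤ S} by
            ext x; simp [hA, hw, not_le]]
          exact h2
        · rw [show (fun x : Fin d → ℝ => (x, w)) ⁻¹' A = (∅ : Set (Fin d → ℝ)) by
            ext x; simp [hA, hw]]
          exact measure_empty
      rw [lintegral_congr hsec, lintegral_zero]
    have hnotae : ∀ᵐ q : (Fin d → ℝ) × (Fin d → ℝ) ∂(volume.prod volume), q ∉ A := by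
      rw [ae_iff]
      rw [show {q : (Fin d → ℝ) × (Fin d → ℝ) | ¬ q ∉ A} = A by ext q; simp]
      exact hA0
    have hae2 := Measure.ae_ae_of_ae_prod hnotae
    have hJb : ∀ᵐ x : Fin d → ℝ, J x ≤ volume W * S := by
      filter_upwards [hae2] with x hx
      have hres : ∀ᵐ w ∂(volume.restrict W), F x w ≤ S := by
        rw [ae_restrict_iff' hWm]
        filter_upwards [hx] with w hw hwW
        by_contra hlt
        exact hw ⟨hwW, not_le.1 hlt⟩
      calc J x ≤ ∫⁻ _ in W, S ∂volume := lintegral_mono_ae hres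
        _ = S * volume W := setLIntegral_const W S
        _ = volume W * S := mul_comm _ _
    have hfin : ∀ᵐ x : Fin d → ℝ, (‖u x -
        ∑ᶠ k : Fin d → ℤ, psi0 h k x * (∏ i, h i)⁻¹ * ∫ y, psi0 h k y * u y‖₊ : ℝ≥0∞)
        ≤ 4 ^ d * S := by
      filter_upwards [hJb] with x hx
      calc (‖u x - ∑ᶠ k : Fin d → ℤ, psi0 h k x * (∏ i, h i)⁻¹ *
              ∫ y, psi0 h k y * u y‖₊ : ℝ≥0∞)
          ≤ c * J x := hpt x
        _ ≤ c * (volume W * S) := mul_le_mul_right hx _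
        _ = (c * volume W) * S := (mul_assoc _ _ _).symm
        _ = 4 ^ d * S := by rw [hcW]
    exact essSup_le_of_ae_le _ hfin
  · have hp0 : p ≠ 0 := fun h0 => by simp [h0] at hp
    set q : ℝ := p.toReal with hq
    have hq1 : 1 ≤ q := by
      rw [hq, ← ENNReal.toReal_one]
      exact ENNReal.toReal_mono hptop hp
    have hq0 : (0:ℝ) < q := by linarith
    rw [eLpNorm_eq_lintegral_rpow_enorm_toReal hp0 hptop]
    have hFx : ∀ x : Fin d → ℝ, Measurable (F x) := by
      intro x
      exact (((hum.comp (measurable_const.add measurable_id)).sub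
        measurable_const).nnnorm).coe_nnreal_ennreal
    have hSw : ∀ᵐ w ∂(volume.restrict W), (∫⁻ x, F x w ^ q ∂volume) ≤ S ^ q := by
      rw [ae_restrict_iff' hWm]
      apply ae_of_all
      intro w hw
      have h1 := hS w hw
      rw [eLpNorm_eq_lintegral_rpow_enorm_toReal hp0 hptop] at h1
      have h2 := ENNReal.rpow_le_rpow h1 hq0.le
      rwa [← ENNReal.rpow_mul, one_div, inv_mul_cancel₀ hq0.ne', ENNReal.rpow_one] at h2
    have hmeas_q : AEMeasurable (Function.uncurry fun x w => F x w ^ q)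
        (volume.prod (volume.restrict W)) := by
      have : Function.uncurry (fun x w => F x w ^ q)
          = fun z : (Fin d → ℝ) × (Fin d → ℝ) => (F z.1 z.2) ^ q := rfl
      rw [this]
      exact (hG.pow_const q).aemeasurable
    have hswap : (∫⁻ x, ∫⁻ w in W, F x w ^ q ∂volume ∂volume)
        = ∫⁻ w in W, ∫⁻ x, F x w ^ q ∂volume ∂volume :=
      lintegral_lintegral_swap hmeas_q
    have hcfin : c ^ q * (volume W) ^ (q - 1) ≠ ⊤ :=
      ENNReal.mul_ne_top (ENNReal.rpow_ne_top_of_nonneg hq0.le ofReal_ne_top)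
        (ENNReal.rpow_ne_top_of_nonneg (by linarith) hWfin)
    have hcore : (∫⁻ x, (‖u x - ∑ᶠ k : Fin d → ℤ, psi0 h k x * (∏ i, h i)⁻¹ *
          ∫ y, psi0 h k y * u y‖₊ : ℝ≥0∞) ^ q ∂volume) ≤ (4 ^ d * S) ^ q := by
      calc (∫⁻ x, (‖u x - ∑ᶠ k : Fin d → ℤ, psi0 h k x * (∏ i, h i)⁻¹ *
              ∫ y, psi0 h k y * u y‖₊ : ℝ≥0∞) ^ q ∂volume)
          ≤ ∫⁻ x, (c * J x) ^ q ∂volume :=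
            lintegral_mono fun x => ENNReal.rpow_le_rpow (hpt x) hq0.le
        _ ≤ ∫⁻ x, c ^ q * ((volume W) ^ (q - 1) * ∫⁻ w in W, F x w ^ q ∂volume) ∂volume := by
            apply lintegral_mono
            intro x
            show (c * J x) ^ q ≤ c ^ q * (volume W ^ (q - 1) * ∫⁻ w in W, F x w ^ q ∂volume)
            rw [ENNReal.mul_rpow_of_nonneg _ _ hq0.le]
            apply mul_le_mul_right
            have hj := jensen_rpow (volume.restrict W) (F x) (hFx x).aemeasurable hq1
            rwa [Measure.restrict_apply_univ] at hj
        _ = c ^ q * (volume W) ^ (q - 1)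
              * ∫⁻ x, ∫⁻ w in W, F x w ^ q ∂volume ∂volume := by
            rw [← lintegral_const_mul' _ _ hcfin]
            apply lintegral_congr
            intro x
            ring
        _ = c ^ q * (volume W) ^ (q - 1)
              * ∫⁻ w in W, ∫⁻ x, F x w ^ q ∂volume ∂volume := by rw [hswap]
        _ ≤ c ^ q * (volume W) ^ (q - 1) * (S ^ q * volume W) := by
            apply mul_le_mul_right
            calc (∫⁻ w in W, ∫⁻ x, F x w ^ q ∂volume ∂volume)
                ≤ ∫⁻ _ in W, S ^ q ∂volume := lintegral_mono_ae hSw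
              _ = S ^ q * volume W := setLIntegral_const _ _
        _ = (4 ^ d * S) ^ q := by
            rw [show (4:ℝ≥0∞) ^ d * S = c * volume W * S by rw [hcW]]
            rw [ENNReal.mul_rpow_of_nonneg _ _ hq0.le,
              ENNReal.mul_rpow_of_nonneg _ _ hq0.le]
            rw [show c ^ q * volume W ^ (q - 1) * (S ^ q * volume W)
              = c ^ q * (volume W ^ (q - 1) * volume W) * S ^ q by ring]
            congr 2
            rw [show volume W ^ (q - 1) * volume W
                = volume W ^ (q - 1) * volume W ^ (1:ℝ) by rw [ENNReal.rpow_one],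
              ← ENNReal.rpow_add _ _ hWpos hWfin]
            congr 1
            ring
    calc (∫⁻ x, (‖u x - ∑ᶠ k : Fin d → ℤ, psi0 h k x * (∏ i, h i)⁻¹ *
            ∫ y, psi0 h k y * u y‖₊ : ℝ≥0∞) ^ q ∂volume) ^ (1 / q)
        ≤ ((4 ^ d * S) ^ q) ^ (1 / q) :=
          ENNReal.rpow_le_rpow hcore (by positivity)
      _ = 4 ^ d * S := by
          rw [← ENNReal.rpow_mul, mul_one_div_cancel hq0.ne', ENNReal.rpow_one]


set_option maxHeartbeats 1000000 in
/-- There is a constant `κ > 0` depending only on `d` such that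
for all grid-steps, all `p ∈ [1, ∞]` and all `u ∈ L^p(ℝ^d)`,
`‖u - Ku‖_p ≤ κ sup{‖τ_w u - u‖_p : |wᵢ| ≤ hᵢ}`, where `K` is the hat-kernel
operator and `τ_w` the translation by `w`. -/
theorem stmt16 (d : ℕ) (hd : 1 ≤ d) :
    ∃ κ : NNReal, 0 < κ ∧
      ∀ (hstep : Fin d → ℝ), (∀ i, 0 < hstep i) →
      ∀ (ψ : (Fin d → ℤ) → (Fin d → ℝ) → ℝ),
        (∀ k x, ψ k x = ∏ i : Fin d, chi (x i / hstep i - (k i : ℝ))) →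
      ∀ (K : ((Fin d → ℝ) → ℝ) → (Fin d → ℝ) → ℝ),
        (∀ u x, K u x = ∑ᶠ k : Fin d → ℤ,
            ψ k x * (∏ i : Fin d, hstep i)⁻¹ * ∫ y : Fin d → ℝ, ψ k y * u y) →
      ∀ (p : ℝ≥0∞), 1 ≤ p →
      ∀ u : (Fin d → ℝ) → ℝ, MemLp u p volume →
        eLpNorm (fun x => u x - K u x) p volume
          ≤ (κ : ℝ≥0∞) * ⨆ w ∈ {w : Fin d → ℝ | ∀ i, |w i| ≤ hstep i},
              eLpNorm (fun x => u (x + w) - u x) p volume := by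
  classical
  refine ⟨2 * 4 ^ d, by positivity, ?_⟩
  intro hstep hpos ψ hψ K hK p hp u hu
  obtain ⟨v, hvm, hveq⟩ : ∃ v, StronglyMeasurable v ∧ u =ᵐ[volume] v :=
    ⟨hu.1.mk u, hu.1.stronglyMeasurable_mk, hu.1.ae_eq_mk⟩
  have hvmeas : Measurable v := hvm.measurable
  have hv : MemLp v p volume := hu.ae_eq hveq
  set T : ℝ≥0∞ := ⨆ w ∈ {w : Fin d → ℝ | ∀ i, |w i| ≤ hstep i},
      eLpNorm (fun x => u (x + w) - u x) p volume with hT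
  have htrans : ∀ w : Fin d → ℝ,
      (fun x => u (x + w) - u x) =ᵐ[volume] (fun x => v (x + w) - v x) := by
    intro w
    have hq := (measurePreserving_add_right (volume : Measure (Fin d → ℝ))
      w).quasiMeasurePreserving
    have h1 := hveq.comp_tendsto hq.tendsto_ae
    filter_upwards [h1, hveq] with x hx1 hx2
    simp only [Function.comp] at hx1
    rw [hx1, hx2]
  have hKu : ∀ x, K u x = ∑ᶠ k : Fin d → ℤ, psi0 hstep k x * (∏ i, hstep i)⁻¹ *
      ∫ y, psi0 hstep k y * v y := by
    intro x
    rw [hK]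
    apply finsum_congr
    intro k
    have e1 : ψ k x = psi0 hstep k x := hψ k x
    have e2 : (∫ y, ψ k y * u y) = ∫ y, psi0 hstep k y * v y := by
      apply integral_congr_ae
      filter_upwards [hveq] with y hy
      rw [hψ k y, hy]
      rfl
    rw [e1, e2]
  have hL : eLpNorm (fun x => u x - K u x) p volume
      = eLpNorm (fun x => v x - ∑ᶠ k : Fin d → ℤ, psi0 hstep k x * (∏ i, hstep i)⁻¹ *
          ∫ y, psi0 hstep k y * v y) p volume := by
    apply eLpNorm_congr_ae
    filter_upwards [hveq] with x hx
    rw [hKu x, hx]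
  have hS : ∀ w, w ∈ Wbox hstep →
      eLpNorm (fun x => v (x + w) - v x) p volume ≤ 2 * T := by
    intro w hw
    rw [← eLpNorm_congr_ae (htrans w)]
    set w2 : Fin d → ℝ := fun i => w i / 2 with hw2
    have hw2mem : w2 ∈ {w : Fin d → ℝ | ∀ i, |w i| ≤ hstep i} := by
      intro i
      have := hw i (Set.mem_univ i)
      rw [Set.mem_Icc] at this
      rw [hw2]
      rw [abs_le]
      constructor <;> [linarith [this.1]; linarith [this.2]]
    set g : (Fin d → ℝ) → ℝ := fun x => u (x + w2) - u x with hg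
    have hgm : AEStronglyMeasurable g volume := by
      apply AEStronglyMeasurable.sub _ hu.1
      exact hu.1.comp_quasiMeasurePreserving
        (measurePreserving_add_right volume w2).quasiMeasurePreserving
    have hgm2 : AEStronglyMeasurable (fun x => g (x + w2)) volume :=
      hgm.comp_quasiMeasurePreserving
        (measurePreserving_add_right volume w2).quasiMeasurePreserving
    have hkey : (fun x => u (x + w) - u x) = fun x => g (x + w2) + g x := by
      funext x
      rw [hg]
      simp only
      have : x + w2 + w2 = x + w := by
        funext i
        simp only [Pi.add_apply, hw2]
        ring
      rw [this]
      ring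
    rw [hkey]
    calc eLpNorm (fun x => g (x + w2) + g x) p volume
        ≤ eLpNorm (fun x => g (x + w2)) p volume + eLpNorm g p volume :=
          eLpNorm_add_le hgm2 hgm hp
      _ = eLpNorm g p volume + eLpNorm g p volume := by
          congr 1
          have hcomp : (fun x => g (x + w2)) = g ∘ (fun x => x + w2) := rfl
          rw [hcomp]
          exact eLpNorm_comp_measurePreserving hgm (measurePreserving_add_right volume w2)
      _ = 2 * eLpNorm g p volume := (two_mul _).symm
      _ ≤ 2 * T := by
          apply mul_le_mul_right
          rw [hT]
          exact le_biSup
            (fun w : Fin d → ℝ => eLpNorm (fun x => u (x + w) - u x) p volume) hw2mem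
  calc eLpNorm (fun x => u x - K u x) p volume
      ≤ 4 ^ d * (2 * T) := by
        rw [hL]
        exact global_est hpos hp hv hvmeas (2 * T) hS
    _ = ((2 * 4 ^ d : NNReal) : ℝ≥0∞) * T := by
        push_cast
        ring
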